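/- Bound on the number of nonimaginary eigenvalues of the linearized 2D Euler operator: Let p ∈ ℤ²∖{0} and Γ ∈ ℂ. Call λ ∈ ℂ an eigenvalue of the linearized 2D Euler operator L at the fixed point ω* if there exists a nonzero square-summable family ω = (ω_k)_{k ∈ ℤ²∖{0}} of complex numbers satisfying, for every k ∈ ℤ²∖{0}, λ ω_k = Γ A(p, k−p) ω_{k−p} + Γ̄ A(−p, k+p) ω_{k+p}, where a term on the right-hand side is omitted whenever its index k−p or k+p equals 0. Let ζ be the number of lattice points q ∈ ℤ²∖{0} with |q| < |p| and p₁q₂ − p₂q₁ ≠ 0 (points in the open disk of radius |p| not parallel to p). Then the set of eigenvalues λ of L with Re λ ≠ 0 is finite and has at most 2ζ elements. -/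

import Mathlib

/-- Squared euclidean norm of a lattice point `k ∈ ℤ²`, as a real number. -/
def nsq (k : ℤ × ℤ) : ℝ := ((k.1 ^ 2 + k.2 ^ 2 : ℤ) : ℝ)

/-- The coefficient A(p,q) = (1/2)(|q|⁻² − |p|⁻²)(p₁q₂ − p₂q₁). -/
noncomputable def coeffA (p q : ℤ × ℤ) : ℝ :=
  (1 / 2) * ((nsq q)⁻¹ - (nsq p)⁻¹) * ((p.1 * q.2 - p.2 * q.1 : ℤ) : ℝ)

/-- λ is an eigenvalue of the linearized 2D Euler operator L at the fixed point ω*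
if there is a nonzero square-summable family ω = (ω_k)_{k ∈ ℤ²∖{0}} (encoded as a
function on ℤ² vanishing at 0, so that terms with index 0 are omitted) with
λ ω_k = Γ A(p, k−p) ω_{k−p} + Γ̄ A(−p, k+p) ω_{k+p} for all k ≠ 0. -/
def IsEigenvalueL (p : ℤ × ℤ) (Γ lam : ℂ) : Prop :=
  ∃ ω : ℤ × ℤ → ℂ, Memℓp ω 2 ∧ ω ≠ 0 ∧ ω 0 = 0 ∧
    ∀ k : ℤ × ℤ, k ≠ 0 → lam * ω k =
      Γ * (coeffA p (k - p) : ℂ) * ω (k - p)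
      + (starRingEnd ℂ) Γ * (coeffA (-p) (k + p) : ℂ) * ω (k + p)

namespace EulerAux

noncomputable def rr (p q : ℤ × ℤ) : ℝ := (nsq q)⁻¹ - (nsq p)⁻¹

noncomputable def bb (p k : ℤ × ℤ) : ℝ := ((p.1 * k.2 - p.2 * k.1 : ℤ) : ℝ)

lemma nsq_nonneg (k : ℤ × ℤ) : 0 ≤ nsq k := by
  unfold nsq
  have : (0:ℤ) ≤ k.1 ^ 2 + k.2 ^ 2 := by positivity
  exact_mod_cast this

lemma nsq_zero : nsq 0 = 0 := by simp [nsq]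

lemma one_le_nsq {k : ℤ × ℤ} (hk : k ≠ 0) : 1 ≤ nsq k := by
  have h : k.1 ≠ 0 ∨ k.2 ≠ 0 := by
    by_contra h
    push_neg at h
    exact hk (Prod.ext h.1 h.2)
  have h1 : (1:ℤ) ≤ k.1 ^ 2 + k.2 ^ 2 := by
    rcases h with h | h
    · have := Int.one_le_abs h
      nlinarith [sq_nonneg k.2, sq_abs k.1]
    · have := Int.one_le_abs h
      nlinarith [sq_nonneg k.1, sq_abs k.2]
  unfold nsq
  exact_mod_cast h1

lemma nsq_pos {k : ℤ × ℤ} (hk : k ≠ 0) : 0 < nsq k := lt_of_lt_of_le one_pos (one_le_nsq hk)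

lemma nsq_inv_nonneg (k : ℤ × ℤ) : 0 ≤ (nsq k)⁻¹ := inv_nonneg.mpr (nsq_nonneg k)

lemma nsq_inv_le_one (k : ℤ × ℤ) : (nsq k)⁻¹ ≤ 1 := by
  rcases eq_or_ne k 0 with rfl | hk
  · simp [nsq_zero]
  · have h1 := one_le_nsq hk
    have h0 : 0 < nsq k := nsq_pos hk
    rw [inv_le_one_iff₀]
    right; exact h1

lemma abs_rr_le (p q : ℤ × ℤ) : |rr p q| ≤ 2 := by
  unfold rr
  have h1 := nsq_inv_nonneg p
  have h2 := nsq_inv_nonneg q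
  have h3 := nsq_inv_le_one p
  have h4 := nsq_inv_le_one q
  rw [abs_le]
  constructor <;> linarith

lemma nsq_neg (k : ℤ × ℤ) : nsq (-k) = nsq k := by simp [nsq]

/-- positivity of rr forces interior point -/
lemma rr_pos {p q : ℤ × ℤ} (hp : p ≠ 0) (h : 0 < rr p q) : q ≠ 0 ∧ nsq q < nsq p := by
  unfold rr at h
  have hp' : 0 < nsq p := nsq_pos hp
  have hq : q ≠ 0 := by
    rintro rfl
    rw [nsq_zero] at h
    simp at h
    have : 0 < (nsq p)⁻¹ := inv_pos.mpr hp'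
    linarith
  have hq' : 0 < nsq q := nsq_pos hq
  refine ⟨hq, ?_⟩
  have : (nsq p)⁻¹ < (nsq q)⁻¹ := by linarith
  exact (inv_lt_inv₀ hp' hq').mp this

/-- The master pointwise equation, valid for ALL k. -/
lemma master {p : ℤ × ℤ} {Γ lam : ℂ} {ω : ℤ × ℤ → ℂ} (h0 : ω 0 = 0)
    (heq : ∀ k : ℤ × ℤ, k ≠ 0 → lam * ω k =
      Γ * (coeffA p (k - p) : ℂ) * ω (k - p)
      + (starRingEnd ℂ) Γ * (coeffA (-p) (k + p) : ℂ) * ω (k + p)) :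
    ∀ k : ℤ × ℤ, lam * ω k =
      ((bb p k : ℝ) / 2 : ℂ) *
        (Γ * ((rr p (k - p) : ℝ) : ℂ) * ω (k - p)
          - (starRingEnd ℂ) Γ * ((rr p (k + p) : ℝ) : ℂ) * ω (k + p)) := by
  intro k
  rcases eq_or_ne k 0 with rfl | hk
  · have hb : bb p 0 = 0 := by simp [bb]
    rw [h0, hb]
    simp
  · rw [heq k hk]
    have h1 : coeffA p (k - p) = 1 / 2 * rr p (k - p) * bb p k := by
      unfold coeffA rr bb
      rw [Prod.fst_sub, Prod.snd_sub]
      push_cast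
      ring
    have h2 : coeffA (-p) (k + p) = -(1 / 2 * rr p (k + p) * bb p k) := by
      unfold coeffA rr bb
      rw [Prod.fst_add, Prod.snd_add, Prod.fst_neg, Prod.snd_neg, nsq_neg]
      push_cast
      ring
    rw [h1, h2]
    push_cast
    ring

open ComplexConjugate in
/-- Key per-line orthogonality identity for the tridiagonal recurrences. -/
lemma seq_orth {lam lam' Γ : ℂ} {c : ℝ} {ρ : ℤ → ℝ} (hρ : ∀ n, |ρ n| ≤ 2)
    {a a' : ℤ → ℂ} (ha : Summable fun n => ‖a n‖ ^ 2) (ha' : Summable fun n => ‖a' n‖ ^ 2)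
    (hA : ∀ n : ℤ, lam * a n = ((c : ℂ) / 2) *
      (Γ * ((ρ (n - 1) : ℝ) : ℂ) * a (n - 1) - conj Γ * ((ρ (n + 1) : ℝ) : ℂ) * a (n + 1)))
    (hA' : ∀ n : ℤ, lam' * a' n = ((c : ℂ) / 2) *
      (Γ * ((ρ (n - 1) : ℝ) : ℂ) * a' (n - 1) - conj Γ * ((ρ (n + 1) : ℝ) : ℂ) * a' (n + 1))) :
    (lam + conj lam') * ∑' n : ℤ, (((ρ n : ℝ) : ℂ) * a n * conj (a' n)) = 0 := by
  classical
  -- shifted square-summability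
  have hshift : ∀ (s : ℤ) (f : ℤ → ℂ), (Summable fun n => ‖f n‖ ^ 2) →
      Summable fun n : ℤ => ‖f (n + s)‖ ^ 2 := by
    intro s f hf
    exact hf.comp_injective (add_left_injective s)
  -- cross summability
  have hcross : ∀ f g : ℤ → ℂ, (Summable fun n => ‖f n‖ ^ 2) →
      (Summable fun n => ‖g n‖ ^ 2) → Summable fun n => ‖f n‖ * ‖g n‖ := by
    intro f g hf hg
    refine Summable.of_nonneg_of_le (fun n => by positivity) (fun n => ?_) (hf.add hg)
    nlinarith [sq_nonneg (‖f n‖ - ‖g n‖), norm_nonneg (f n), norm_nonneg (g n)]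
  -- summability of weighted products
  have hwmul : ∀ (w : ℤ → ℝ), (∀ n, |w n| ≤ 4) → ∀ f g : ℤ → ℂ,
      (Summable fun n => ‖f n‖ * ‖g n‖) →
      Summable fun n => ((w n : ℝ) : ℂ) * f n * conj (g n) := by
    intro w hw f g hfg
    apply Summable.of_norm
    refine Summable.of_nonneg_of_le (fun n => norm_nonneg _) (fun n => ?_) (hfg.mul_left 4)
    have h1 : ‖((w n : ℝ) : ℂ) * f n * conj (g n)‖ = |w n| * ‖f n‖ * ‖g n‖ := by
      simp [norm_mul]
    rw [h1]
    have := hw n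
    have h2 : (0:ℝ) ≤ ‖f n‖ * ‖g n‖ := by positivity
    have h3 := norm_nonneg (f n)
    have h4 := norm_nonneg (g n)
    nlinarith
  -- weights
  have hwP : ∀ n : ℤ, |ρ (n - 1) * ρ n| ≤ 4 := by
    intro n
    rw [abs_mul]
    have h1 := hρ (n - 1); have h2 := hρ n
    have h3 := abs_nonneg (ρ (n-1)); have h4 := abs_nonneg (ρ n)
    nlinarith
  have hwQ : ∀ n : ℤ, |ρ n * ρ (n + 1)| ≤ 4 := by
    intro n
    rw [abs_mul]
    have h1 := hρ (n + 1); have h2 := hρ n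
    have h3 := abs_nonneg (ρ (n+1)); have h4 := abs_nonneg (ρ n)
    nlinarith
  -- the four shifted sums
  have ham1 : Summable fun n : ℤ => ‖a (n + (-1))‖ ^ 2 := hshift (-1) a ha
  have hap1 : Summable fun n : ℤ => ‖a (n + 1)‖ ^ 2 := hshift 1 a ha
  have ham1' : Summable fun n : ℤ => ‖a' (n + (-1))‖ ^ 2 := hshift (-1) a' ha'
  have hap1' : Summable fun n : ℤ => ‖a' (n + 1)‖ ^ 2 := hshift 1 a' ha'
  have c1 : Summable fun n : ℤ => ‖a (n - 1)‖ * ‖a' n‖ := by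
    have := hcross _ _ ham1 ha'
    simpa [sub_eq_add_neg] using this
  have c2 : Summable fun n : ℤ => ‖a (n + 1)‖ * ‖a' n‖ := hcross _ _ hap1 ha'
  have c3 : Summable fun n : ℤ => ‖a n‖ * ‖a' (n - 1)‖ := by
    have := hcross _ _ ha ham1'
    simpa [sub_eq_add_neg] using this
  have c4 : Summable fun n : ℤ => ‖a n‖ * ‖a' (n + 1)‖ := hcross _ _ ha hap1'
  have ht1 : Summable fun n : ℤ => ((ρ (n - 1) * ρ n : ℝ) : ℂ) * a (n - 1) * conj (a' n) :=
    hwmul _ hwP _ _ c1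
  have ht2 : Summable fun n : ℤ => ((ρ n * ρ (n + 1) : ℝ) : ℂ) * a (n + 1) * conj (a' n) :=
    hwmul _ hwQ _ _ c2
  have ht3 : Summable fun n : ℤ => ((ρ (n - 1) * ρ n : ℝ) : ℂ) * a n * conj (a' (n - 1)) :=
    hwmul _ hwP _ _ c3
  have ht4 : Summable fun n : ℤ => ((ρ n * ρ (n + 1) : ℝ) : ℂ) * a n * conj (a' (n + 1)) :=
    hwmul _ hwQ _ _ c4
  set T1 := ∑' n : ℤ, ((ρ (n - 1) * ρ n : ℝ) : ℂ) * a (n - 1) * conj (a' n) with hT1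
  set T2 := ∑' n : ℤ, ((ρ n * ρ (n + 1) : ℝ) : ℂ) * a (n + 1) * conj (a' n) with hT2
  set T3 := ∑' n : ℤ, ((ρ (n - 1) * ρ n : ℝ) : ℂ) * a n * conj (a' (n - 1)) with hT3
  set T4 := ∑' n : ℤ, ((ρ n * ρ (n + 1) : ℝ) : ℂ) * a n * conj (a' (n + 1)) with hT4
  set S := ∑' n : ℤ, (((ρ n : ℝ) : ℂ) * a n * conj (a' n)) with hS
  -- step A
  have hLamS : lam * S = ((c : ℂ) / 2 * Γ) * T1 - ((c : ℂ) / 2 * conj Γ) * T2 := by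
    rw [hS, ← tsum_mul_left]
    rw [show (fun n : ℤ => lam * (((ρ n : ℝ) : ℂ) * a n * conj (a' n))) = fun n : ℤ =>
        ((c : ℂ) / 2 * Γ) * (((ρ (n - 1) * ρ n : ℝ) : ℂ) * a (n - 1) * conj (a' n)) -
        ((c : ℂ) / 2 * conj Γ) * (((ρ n * ρ (n + 1) : ℝ) : ℂ) * a (n + 1) * conj (a' n)) from
      funext fun n => by
        have h : lam * (((ρ n : ℝ) : ℂ) * a n * conj (a' n)) =
            ((ρ n : ℝ) : ℂ) * (lam * a n) * conj (a' n) := by ring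
        rw [h, hA n]
        push_cast
        ring]
    rw [Summable.tsum_sub (ht1.mul_left _) (ht2.mul_left _), tsum_mul_left, tsum_mul_left]
  -- step B
  have hConjS : conj lam' * S = ((c : ℂ) / 2 * conj Γ) * T3 - ((c : ℂ) / 2 * Γ) * T4 := by
    rw [hS, ← tsum_mul_left]
    rw [show (fun n : ℤ => conj lam' * (((ρ n : ℝ) : ℂ) * a n * conj (a' n))) = fun n : ℤ =>
        ((c : ℂ) / 2 * conj Γ) * (((ρ (n - 1) * ρ n : ℝ) : ℂ) * a n * conj (a' (n - 1))) -
        ((c : ℂ) / 2 * Γ) * (((ρ n * ρ (n + 1) : ℝ) : ℂ) * a n * conj (a' (n + 1))) from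
      funext fun n => by
        have h : conj lam' * (((ρ n : ℝ) : ℂ) * a n * conj (a' n)) =
            ((ρ n : ℝ) : ℂ) * a n * conj (lam' * a' n) := by
          rw [map_mul]; ring
        have h2 := congrArg conj (hA' n)
        simp only [map_mul, map_sub, map_div₀, Complex.conj_ofReal, Complex.conj_conj,
          map_ofNat] at h2
        rw [h, map_mul, h2]
        push_cast
        ring]
    rw [Summable.tsum_sub (ht3.mul_left _) (ht4.mul_left _), tsum_mul_left, tsum_mul_left]
  -- reindexing
  have h32 : T3 = T2 := by
    rw [hT2, show (fun n : ℤ => ((ρ n * ρ (n + 1) : ℝ) : ℂ) * a (n + 1) * conj (a' n)) =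
        fun n : ℤ => ((ρ ((n+1) - 1) * ρ (n+1) : ℝ) : ℂ) * a (n+1) * conj (a' ((n+1) - 1)) from
      funext fun n => by norm_num]
    exact ((Equiv.addRight (1 : ℤ)).tsum_eq
      (fun n : ℤ => ((ρ (n - 1) * ρ n : ℝ) : ℂ) * a n * conj (a' (n - 1)))).symm
  have h41 : T4 = T1 := by
    rw [hT1, show (fun n : ℤ => ((ρ (n - 1) * ρ n : ℝ) : ℂ) * a (n - 1) * conj (a' n)) =
        fun n : ℤ => ((ρ (n-1) * ρ ((n-1) + 1) : ℝ) : ℂ) * a (n-1) * conj (a' ((n-1) + 1)) from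
      funext fun n => by norm_num]
    exact ((Equiv.subRight (1 : ℤ)).tsum_eq
      (fun n : ℤ => ((ρ n * ρ (n + 1) : ℝ) : ℂ) * a n * conj (a' (n + 1)))).symm
  have : (lam + conj lam') * S = lam * S + conj lam' * S := by ring
  rw [this, hLamS, hConjS, h32, h41]
  ring

lemma line_sq_summable {p : ℤ × ℤ} (hp : p ≠ 0) {ω : ℤ × ℤ → ℂ} (hω : Memℓp ω 2)
    (b : ℤ × ℤ) : Summable (fun n : ℤ => ‖ω (b + n • p)‖ ^ 2) := by
  have h2 : Summable (fun k : ℤ × ℤ => ‖ω k‖ ^ ((2 : ENNReal)).toReal) :=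
    hω.summable (by norm_num)
  have h2' : Summable (fun k : ℤ × ℤ => ‖ω k‖ ^ 2) := by
    have he : ((2 : ENNReal)).toReal = ((2 : ℕ) : ℝ) := by norm_num
    simpa [he, Real.rpow_natCast] using h2
  apply h2'.comp_injective
  intro m n h
  simp only [add_right_inj] at h
  exact smul_left_injective ℤ hp h

open ComplexConjugate in
lemma summable_cross' {a a' : ℤ → ℂ} (ha : Summable fun n => ‖a n‖ ^ 2)
    (ha' : Summable fun n => ‖a' n‖ ^ 2) : Summable fun n => ‖a n‖ * ‖a' n‖ := by
  refine Summable.of_nonneg_of_le (fun n => by positivity) (fun n => ?_) (ha.add ha')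
  nlinarith [sq_nonneg (‖a n‖ - ‖a' n‖), norm_nonneg (a n), norm_nonneg (a' n)]

open ComplexConjugate in
lemma summable_weighted {C : ℝ} {w : ℤ → ℝ} (hw : ∀ n, |w n| ≤ C) {a a' : ℤ → ℂ}
    (h : Summable fun n => ‖a n‖ * ‖a' n‖) :
    Summable fun n => ((w n : ℝ) : ℂ) * a n * conj (a' n) := by
  apply Summable.of_norm
  refine Summable.of_nonneg_of_le (fun n => norm_nonneg _) (fun n => ?_) (h.mul_left C)
  have h1 : ‖((w n : ℝ) : ℂ) * a n * conj (a' n)‖ = |w n| * ‖a n‖ * ‖a' n‖ := by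
    simp [norm_mul]
  rw [h1, mul_assoc]
  exact mul_le_mul_of_nonneg_right (hw n) (by positivity)

/-- index shifts along a line -/
lemma line_sub {p b : ℤ × ℤ} (n : ℤ) : b + n • p - p = b + (n - 1) • p := by
  rw [sub_smul, one_smul]; abel

lemma line_add {p b : ℤ × ℤ} (n : ℤ) : b + n • p + p = b + (n + 1) • p := by
  rw [add_smul, one_smul]; abel

lemma bb_line {p b : ℤ × ℤ} (n : ℤ) : bb p (b + n • p) = bb p b := by
  unfold bb
  have h1 : (b + n • p).1 = b.1 + n * p.1 := by
    simp [Prod.fst_add, Prod.smul_fst, smul_eq_mul]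
  have h2 : (b + n • p).2 = b.2 + n * p.2 := by
    simp [Prod.snd_add, Prod.smul_snd, smul_eq_mul]
  rw [h1, h2]
  push_cast
  ring

open ComplexConjugate in
/-- The key line-orthogonality relation between eigenvectors. -/
lemma line_orth {p : ℤ × ℤ} (hp : p ≠ 0) {Γ lam lam' : ℂ} {ω ω' : ℤ × ℤ → ℂ}
    (hω : Memℓp ω 2) (hω' : Memℓp ω' 2)
    (hm : ∀ k : ℤ × ℤ, lam * ω k = ((bb p k : ℝ) : ℂ) / 2 *
      (Γ * ((rr p (k - p) : ℝ) : ℂ) * ω (k - p)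
        - conj Γ * ((rr p (k + p) : ℝ) : ℂ) * ω (k + p)))
    (hm' : ∀ k : ℤ × ℤ, lam' * ω' k = ((bb p k : ℝ) : ℂ) / 2 *
      (Γ * ((rr p (k - p) : ℝ) : ℂ) * ω' (k - p)
        - conj Γ * ((rr p (k + p) : ℝ) : ℂ) * ω' (k + p)))
    (b : ℤ × ℤ) :
    (lam + conj lam') * ∑' n : ℤ,
      (((rr p (b + n • p) : ℝ) : ℂ) * ω (b + n • p) * conj (ω' (b + n • p))) = 0 := by
  refine seq_orth (Γ := Γ) (c := bb p b) (ρ := fun n => rr p (b + n • p))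
    (fun n => abs_rr_le p _) (line_sq_summable hp hω b) (line_sq_summable hp hω' b) ?_ ?_
  · intro n
    have h := hm (b + n • p)
    rwa [line_sub n, line_add n, bb_line n] at h
  · intro n
    have h := hm' (b + n • p)
    rwa [line_sub n, line_add n, bb_line n] at h

lemma coeffA_pneg (p : ℤ × ℤ) : coeffA p (-p) = 0 := by
  unfold coeffA
  rw [nsq_neg]
  simp

lemma coeffA_negp (p : ℤ × ℤ) : coeffA (-p) p = 0 := by
  unfold coeffA
  rw [nsq_neg]
  simp

lemma finite_S (p : ℤ × ℤ) :
    {q : ℤ × ℤ | q ≠ 0 ∧ nsq q < nsq p ∧ p.1 * q.2 - p.2 * q.1 ≠ 0}.Finite := by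
  set M : ℤ := p.1 ^ 2 + p.2 ^ 2 with hM
  apply Set.Finite.subset (Set.finite_Icc ((-M, -M) : ℤ × ℤ) ((M, M) : ℤ × ℤ))
  rintro q ⟨hq0, hlt, -⟩
  have h : q.1 ^ 2 + q.2 ^ 2 < M := by
    unfold nsq at hlt
    exact_mod_cast hlt
  have h1 := Int.le_self_sq q.1
  have h2 := Int.le_self_sq q.2
  have h3 := Int.le_self_sq (-q.1)
  have h4 := Int.le_self_sq (-q.2)
  have hq1 := sq_nonneg q.1
  have hq2 := sq_nonneg q.2
  rw [Set.mem_Icc, Prod.le_def, Prod.le_def]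
  refine ⟨⟨?_, ?_⟩, ?_, ?_⟩
  · show -M ≤ q.1
    nlinarith [neg_sq q.1]
  · show -M ≤ q.2
    nlinarith [neg_sq q.2]
  · show q.1 ≤ M
    nlinarith
  · show q.2 ≤ M
    nlinarith

/-- Memℓp of finite sums. -/
lemma memℓp_sum {ι : Type*} (s : Finset ι) (F : ι → (ℤ × ℤ) → ℂ)
    (hF : ∀ i ∈ s, Memℓp (F i) 2) :
    Memℓp (fun k => ∑ i ∈ s, F i k) 2 := by
  classical
  induction s using Finset.induction_on with
  | empty => simp only [Finset.sum_empty]; exact zero_memℓp (E := fun _ : ℤ × ℤ => ℂ) (p := 2)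
  | insert a s' hni ih =>
    have h1 : Memℓp (F a) 2 := hF a (Finset.mem_insert_self a s')
    have h2 : Memℓp (fun k => ∑ i ∈ s', F i k) 2 := ih (fun i hi => hF i (Finset.mem_insert_of_mem hi))
    have := h1.add h2
    convert this using 1
    funext k
    simp [Finset.sum_insert hni, Pi.add_apply]

open ComplexConjugate in
lemma key_card {p : ℤ × ℤ} (hp : p ≠ 0) (Γ : ℂ) (T : Finset ℂ)
    (hT : ∀ lam ∈ T, IsEigenvalueL p Γ lam)
    (hsign : ∀ lam ∈ T, ∀ μ ∈ T, (lam + conj μ).re ≠ 0) :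
    T.card ≤ {q : ℤ × ℤ | q ≠ 0 ∧ nsq q < nsq p ∧ p.1 * q.2 - p.2 * q.1 ≠ 0}.ncard := by
  classical
  set S := {q : ℤ × ℤ | q ≠ 0 ∧ nsq q < nsq p ∧ p.1 * q.2 - p.2 * q.1 ≠ 0} with hSdef
  have hSfin : S.Finite := finite_S p
  have hlam0 : ∀ lam ∈ T, lam ≠ 0 := by
    intro lam hl h0
    have := hsign lam hl lam hl
    rw [h0] at this
    simp at this
  -- choose eigenvectors
  have hWex : ∀ lam : ℂ, ∃ ω : ℤ × ℤ → ℂ, lam ∈ T →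
      (Memℓp ω 2 ∧ ω ≠ 0 ∧ ω 0 = 0 ∧ ∀ k : ℤ × ℤ, k ≠ 0 → lam * ω k =
        Γ * (coeffA p (k - p) : ℂ) * ω (k - p)
        + conj Γ * (coeffA (-p) (k + p) : ℂ) * ω (k + p)) := by
    intro lam
    by_cases h : lam ∈ T
    · exact (hT lam h).imp (fun ω hω => fun _ => hω)
    · exact ⟨0, fun h' => absurd h' h⟩
  choose W hWs using hWex
  -- master equations
  have hmas : ∀ lam ∈ T, ∀ k : ℤ × ℤ, lam * W lam k = ((bb p k : ℝ) : ℂ) / 2 *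
      (Γ * ((rr p (k - p) : ℝ) : ℂ) * W lam (k - p)
        - conj Γ * ((rr p (k + p) : ℝ) : ℂ) * W lam (k + p)) := by
    intro lam hl
    exact master (hWs lam hl).2.2.1 (hWs lam hl).2.2.2
  -- B-orthogonality of pairs of eigenvectors, along each line
  have horth : ∀ lam ∈ T, ∀ μ ∈ T, ∀ b : ℤ × ℤ,
      ∑' n : ℤ, (((rr p (b + n • p) : ℝ) : ℂ) * W lam (b + n • p)
        * conj (W μ (b + n • p))) = 0 := by
    intro lam hl μ hm b
    have h := line_orth hp (hWs lam hl).1 (hWs μ hm).1 (hmas lam hl) (hmas μ hm) b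
    have hne : lam + conj μ ≠ 0 := fun h0 => hsign lam hl μ hm (by rw [h0]; simp)
    exact (mul_eq_zero.mp h).resolve_left hne
  -- eigenvectors vanish on lines parallel to p
  have hpar : ∀ lam ∈ T, ∀ k : ℤ × ℤ, bb p k = 0 → W lam k = 0 := by
    intro lam hl k hb
    have h := hmas lam hl k
    rw [hb] at h
    simp only [Complex.ofReal_zero, zero_div, zero_mul] at h
    rcases mul_eq_zero.mp h with h' | h'
    · exact absurd h' (hlam0 lam hl)
    · exact h'
  have hcard : S.ncard = hSfin.toFinset.card := Set.ncard_eq_toFinset_card S hSfin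
  set F : {x // x ∈ T} → ({q // q ∈ hSfin.toFinset} → ℂ) :=
    fun i q => W i.val q.val with hF
  have hLI : LinearIndependent ℂ F := by
    rw [Fintype.linearIndependent_iff]
    intro g hg i₀
    set v : ℤ × ℤ → ℂ := fun k => ∑ i : {x // x ∈ T}, g i * W i.val k with hv
    have hvS : ∀ q ∈ S, v q = 0 := by
      intro q hq
      have h := congrFun hg ⟨q, hSfin.mem_toFinset.mpr hq⟩
      simpa [hF, hv, Finset.sum_apply, Pi.smul_apply, smul_eq_mul] using h
    have hvpar : ∀ k : ℤ × ℤ, bb p k = 0 → v k = 0 := by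
      intro k hb
      show ∑ i : {x // x ∈ T}, g i * W i.val k = 0
      apply Finset.sum_eq_zero
      intro i _
      rw [hpar i.val i.property k hb, mul_zero]
    -- the per-line quadratic form of v vanishes
    have hvline : ∀ b : ℤ × ℤ,
        ∑' n : ℤ, (((rr p (b + n • p) : ℝ) : ℂ) * v (b + n • p)
          * conj (v (b + n • p))) = 0 := by
      intro b
      have hsummand : ∀ i j : {x // x ∈ T}, Summable (fun n : ℤ =>
          (g i * conj (g j)) * (((rr p (b + n • p) : ℝ) : ℂ) * W i.val (b + n • p)
            * conj (W j.val (b + n • p)))) := by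
        intro i j
        apply Summable.mul_left
        apply summable_weighted (C := 2) (fun n => abs_rr_le p _)
        exact summable_cross' (line_sq_summable hp (hWs i.val i.property).1 b)
          (line_sq_summable hp (hWs j.val j.property).1 b)
      have hpt : ∀ n : ℤ, (((rr p (b + n • p) : ℝ) : ℂ) * v (b + n • p)
          * conj (v (b + n • p))) =
          ∑ i : {x // x ∈ T}, ∑ j : {x // x ∈ T},
            (g i * conj (g j)) * (((rr p (b + n • p) : ℝ) : ℂ) * W i.val (b + n • p)
              * conj (W j.val (b + n • p))) := by
        intro n
        show (((rr p (b + n • p) : ℝ) : ℂ) * (∑ i : {x // x ∈ T}, g i * W i.val (b + n • p))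
          * conj (∑ j : {x // x ∈ T}, g j * W j.val (b + n • p))) = _
        rw [map_sum]
        simp only [Finset.mul_sum, Finset.sum_mul]
        rw [Finset.sum_comm]
        apply Finset.sum_congr rfl
        intro i _
        apply Finset.sum_congr rfl
        intro j _
        rw [map_mul]
        ring
      rw [tsum_congr hpt,
        Summable.tsum_finsetSum (fun i _ => summable_sum (fun j _ => hsummand i j))]
      apply Finset.sum_eq_zero
      intro i _
      rw [Summable.tsum_finsetSum (fun j _ => hsummand i j)]
      apply Finset.sum_eq_zero
      intro j _
      rw [tsum_mul_left, horth i.val i.property j.val j.property b, mul_zero]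
    -- v vanishes wherever rr ≠ 0
    have hv2 : Memℓp v 2 := by
      have h := memℓp_sum (Finset.univ : Finset {x // x ∈ T})
        (fun i => fun k => g i * W i.val k)
        (fun i _ => (hWs i.val i.property).1.const_mul (g i))
      exact h
    have hvz : ∀ k : ℤ × ℤ, rr p k ≠ 0 → v k = 0 := by
      intro k hk
      have h0 := hvline k
      have hterm : ∀ n : ℤ, (((rr p (k + n • p) : ℝ) : ℂ) * v (k + n • p)
          * conj (v (k + n • p))) =
          (((rr p (k + n • p) * ‖v (k + n • p)‖ ^ 2 : ℝ)) : ℂ) := by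
        intro n
        rw [mul_assoc, Complex.mul_conj, ← Complex.ofReal_mul]
        congr 1
        rw [Complex.normSq_eq_norm_sq]
      have hsumf : Summable (fun n : ℤ => rr p (k + n • p) * ‖v (k + n • p)‖ ^ 2) := by
        apply Summable.of_abs
        refine Summable.of_nonneg_of_le (fun n => abs_nonneg _) (fun n => ?_)
          ((line_sq_summable hp hv2 k).mul_left 2)
        rw [abs_mul, abs_of_nonneg (a := ‖v (k + n • p)‖ ^ 2) (by positivity)]
        exact mul_le_mul_of_nonneg_right (abs_rr_le p _) (by positivity)
      have htsum0 : ∑' n : ℤ, (rr p (k + n • p) * ‖v (k + n • p)‖ ^ 2) = 0 := by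
        have h1 : ((∑' n : ℤ, (rr p (k + n • p) * ‖v (k + n • p)‖ ^ 2) : ℝ) : ℂ) = 0 := by
          rw [Complex.ofReal_tsum, ← tsum_congr hterm]
          exact h0
        exact_mod_cast h1
      have hle : ∀ m : ℤ, rr p (k + m • p) * ‖v (k + m • p)‖ ^ 2 ≤ 0 := by
        intro m
        rcases le_or_gt (rr p (k + m • p)) 0 with h | h
        · have h2 : (0:ℝ) ≤ ‖v (k + m • p)‖ ^ 2 := by positivity
          exact mul_nonpos_of_nonpos_of_nonneg h h2
        · obtain ⟨hq0, hlt⟩ := rr_pos hp h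
          have hvm : v (k + m • p) = 0 := by
            by_cases hbb : p.1 * (k + m • p).2 - p.2 * (k + m • p).1 = 0
            · apply hvpar
              unfold bb
              rw [hbb]
              simp
            · exact hvS _ ⟨hq0, hlt, hbb⟩
          rw [hvm]
          simp
      have hterm0 : rr p (k + (0:ℤ) • p) * ‖v (k + (0:ℤ) • p)‖ ^ 2 = 0 := by
        have hneg : Summable (fun m : ℤ => -(rr p (k + m • p) * ‖v (k + m • p)‖ ^ 2)) :=
          hsumf.neg
        have h1 : -(rr p (k + (0:ℤ) • p) * ‖v (k + (0:ℤ) • p)‖ ^ 2) ≤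
            ∑' m : ℤ, -(rr p (k + m • p) * ‖v (k + m • p)‖ ^ 2) :=
          Summable.le_tsum hneg 0 (fun j _ => by simpa using hle j)
        rw [tsum_neg, htsum0, neg_zero] at h1
        have h2 := hle (0:ℤ)
        linarith
      rw [zero_smul, add_zero] at hterm0
      rcases mul_eq_zero.mp hterm0 with h | h
      · exact absurd h hk
      · have := pow_eq_zero_iff (n := 2) (by norm_num) |>.mp h
        simpa using this
    have hrv : ∀ q : ℤ × ℤ, ((rr p q : ℝ) : ℂ) * v q = 0 := by
      intro q
      rcases eq_or_ne (rr p q) 0 with h | h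
      · rw [h]; simp
      · rw [hvz q h]; simp
    -- the image under L vanishes
    have hLv : ∀ k : ℤ × ℤ, ∑ i : {x // x ∈ T}, (g i * i.val) * W i.val k = 0 := by
      intro k
      have hterm : ∀ i : {x // x ∈ T}, (g i * i.val) * W i.val k =
          (((bb p k : ℝ) : ℂ) / 2 * Γ * ((rr p (k - p) : ℝ) : ℂ)) * (g i * W i.val (k - p))
          - (((bb p k : ℝ) : ℂ) / 2 * conj Γ * ((rr p (k + p) : ℝ) : ℂ))
            * (g i * W i.val (k + p)) := by
        intro i
        have h2 : (g i * i.val) * W i.val k = g i * (i.val * W i.val k) := by ring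
        rw [h2, hmas i.val i.property k]
        ring
      rw [Finset.sum_congr rfl (fun i _ => hterm i), Finset.sum_sub_distrib,
        ← Finset.mul_sum, ← Finset.mul_sum]
      have e1 : (((bb p k : ℝ) : ℂ) / 2 * Γ * ((rr p (k - p) : ℝ) : ℂ))
          * (∑ i : {x // x ∈ T}, g i * W i.val (k - p)) =
          (((bb p k : ℝ) : ℂ) / 2 * Γ) * (((rr p (k - p) : ℝ) : ℂ) * v (k - p)) := by
        rw [hv]; ring
      have e2 : (((bb p k : ℝ) : ℂ) / 2 * conj Γ * ((rr p (k + p) : ℝ) : ℂ))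
          * (∑ i : {x // x ∈ T}, g i * W i.val (k + p)) =
          (((bb p k : ℝ) : ℂ) / 2 * conj Γ) * (((rr p (k + p) : ℝ) : ℂ) * v (k + p)) := by
        rw [hv]; ring
      rw [e1, e2, hrv (k - p), hrv (k + p), mul_zero, mul_zero, sub_zero]
    -- eigenvector independence
    set Lop : ((ℤ × ℤ) → ℂ) →ₗ[ℂ] ((ℤ × ℤ) → ℂ) :=
      { toFun := fun ω k => Γ * (coeffA p (k - p) : ℂ) * ω (k - p)
          + conj Γ * (coeffA (-p) (k + p) : ℂ) * ω (k + p),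
        map_add' := by
          intro f f'
          funext k
          simp only [Pi.add_apply]
          ring,
        map_smul' := by
          intro c f
          funext k
          simp only [Pi.smul_apply, smul_eq_mul, RingHom.id_apply]
          ring } with hLop
    have hEig : ∀ i : {x // x ∈ T}, Module.End.HasEigenvector Lop i.val (W i.val) := by
      intro i
      refine ⟨Module.End.mem_eigenspace_iff.mpr ?_, (hWs i.val i.property).2.1⟩
      funext k
      show Γ * (coeffA p (k - p) : ℂ) * W i.val (k - p)
          + conj Γ * (coeffA (-p) (k + p) : ℂ) * W i.val (k + p) = (i.val • W i.val) k
      rcases eq_or_ne k 0 with rfl | hk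
      · rw [Pi.smul_apply, smul_eq_mul, (hWs i.val i.property).2.2.1]
        rw [zero_sub, zero_add, coeffA_pneg, coeffA_negp]
        simp
      · rw [Pi.smul_apply, smul_eq_mul]
        exact ((hWs i.val i.property).2.2.2 k hk).symm
    have hWLI : LinearIndependent ℂ (fun i : {x // x ∈ T} => W i.val) :=
      Module.End.eigenvectors_linearIndependent' Lop (fun i : {x // x ∈ T} => i.val)
        Subtype.coe_injective _ hEig
    have hzero : ∑ i : {x // x ∈ T}, (g i * ↑i.val) • W i.val = 0 := by
      funext k
      rw [Finset.sum_apply]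
      simp only [Pi.smul_apply, smul_eq_mul, Pi.zero_apply]
      exact hLv k
    have hfin := Fintype.linearIndependent_iff.mp hWLI (fun i => g i * ↑i.val) hzero i₀
    rcases mul_eq_zero.mp hfin with h | h
    · exact h
    · exact absurd h (hlam0 i₀.val i₀.property)
  -- conclude the cardinality bound
  have hle := hLI.fintype_card_le_finrank
  rw [Module.finrank_pi] at hle
  calc T.card = Fintype.card {x // x ∈ T} := (Fintype.card_coe T).symm
    _ ≤ Fintype.card {q // q ∈ hSfin.toFinset} := hle
    _ = hSfin.toFinset.card := Fintype.card_coe _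
    _ = S.ncard := hcard.symm

end EulerAux

theorem nonimaginary_eigenvalues_bound
    (p : ℤ × ℤ) (hp : p ≠ 0) (Γ : ℂ) :
    let ζ : ℕ := Set.ncard {q : ℤ × ℤ | q ≠ 0 ∧ nsq q < nsq p ∧
      p.1 * q.2 - p.2 * q.1 ≠ 0}
    {lam : ℂ | lam.re ≠ 0 ∧ IsEigenvalueL p Γ lam}.Finite
      ∧ Set.ncard {lam : ℂ | lam.re ≠ 0 ∧ IsEigenvalueL p Γ lam} ≤ 2 * ζ := by
  classical
  intro ζ
  set Ep := {lam : ℂ | 0 < lam.re ∧ IsEigenvalueL p Γ lam} with hEp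
  set En := {lam : ℂ | lam.re < 0 ∧ IsEigenvalueL p Γ lam} with hEn
  have hunion : {lam : ℂ | lam.re ≠ 0 ∧ IsEigenvalueL p Γ lam} = Ep ∪ En := by
    ext lam
    simp only [Set.mem_setOf_eq, Set.mem_union, hEp, hEn]
    constructor
    · rintro ⟨h1, h2⟩
      rcases h1.lt_or_gt with h | h
      · right; exact ⟨h, h2⟩
      · left; exact ⟨h, h2⟩
    · rintro (⟨h1, h2⟩ | ⟨h1, h2⟩)
      · exact ⟨ne_of_gt h1, h2⟩
      · exact ⟨ne_of_lt h1, h2⟩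
  have hboundP : ∀ Tf : Finset ℂ, ↑Tf ⊆ Ep → Tf.card ≤ ζ := by
    intro Tf hsub
    apply EulerAux.key_card hp Γ Tf
    · intro lam hl
      exact (hsub (Finset.mem_coe.mpr hl)).2
    · intro lam hl μ hm
      have h1 := (hsub (Finset.mem_coe.mpr hl)).1
      have h2 := (hsub (Finset.mem_coe.mpr hm)).1
      rw [Complex.add_re, Complex.conj_re]
      exact ne_of_gt (by linarith)
  have hboundN : ∀ Tf : Finset ℂ, ↑Tf ⊆ En → Tf.card ≤ ζ := by
    intro Tf hsub
    apply EulerAux.key_card hp Γ Tf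
    · intro lam hl
      exact (hsub (Finset.mem_coe.mpr hl)).2
    · intro lam hl μ hm
      have h1 := (hsub (Finset.mem_coe.mpr hl)).1
      have h2 := (hsub (Finset.mem_coe.mpr hm)).1
      rw [Complex.add_re, Complex.conj_re]
      exact ne_of_lt (by linarith)
  have hgen : ∀ (E : Set ℂ) (n : ℕ), (∀ Tf : Finset ℂ, ↑Tf ⊆ E → Tf.card ≤ n) →
      E.Finite ∧ E.ncard ≤ n := by
    intro E n h
    have hfin : E.Finite := by
      by_contra hinf
      rw [← Set.not_infinite, not_not] at hinf
      obtain ⟨t, hts, htf, htc⟩ := hinf.exists_subset_ncard_eq (n + 1)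
      have hb := h htf.toFinset (by simpa using hts)
      rw [Set.ncard_eq_toFinset_card t htf] at htc
      omega
    refine ⟨hfin, ?_⟩
    have hb := h hfin.toFinset (by simp)
    rwa [Set.ncard_eq_toFinset_card _ hfin]
  obtain ⟨hfinP, hcardP⟩ := hgen Ep ζ hboundP
  obtain ⟨hfinN, hcardN⟩ := hgen En ζ hboundN
  rw [hunion]
  refine ⟨hfinP.union hfinN, ?_⟩
  calc (Ep ∪ En).ncard ≤ Ep.ncard + En.ncard := Set.ncard_union_le Ep En
    _ ≤ ζ + ζ := add_le_add hcardP hcardN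
    _ = 2 * ζ := by ring
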